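/- Let X be an abelian Polish group, let A ⊆ X be a Borel set belonging to F(X) (i.e., for every compact set K ⊆ X there exists x ∈ X with K + x ⊆ A), and let B ⊆ ℝ be a meager Borel set of positive Lebesgue measure. Then the set S := B × A is Haar meager (hence meager) but not Haar null in the abelian Polish group ℝ × X. -/

import Mathlib

open MeasureTheory Set Metric Filter Topology ENNReal

lemma exists_isCompact_pos {Y : Type*} [TopologicalSpace Y] [PolishSpace Y]
    [MeasurableSpace Y] [BorelSpace Y] (μ : Measure Y) [IsFiniteMeasure μ] (hμ : μ ≠ 0) :
    ∃ C : Set Y, IsCompact C ∧ 0 < μ C := by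
  letI := TopologicalSpace.upgradeIsCompletelyMetrizable Y
  have hne : Nonempty Y := by
    rcases isEmpty_or_nonempty Y with h | h
    · exact absurd (Subsingleton.elim μ 0) hμ
    · exact h
  set m := μ univ with hm
  have hm0 : m ≠ 0 := Measure.measure_univ_ne_zero.mpr hμ
  have hmtop : m ≠ ∞ := measure_ne_top μ univ
  set u := TopologicalSpace.denseSeq Y with hu_def
  have hu : DenseRange u := TopologicalSpace.denseRange_denseSeq Y
  have cover : ∀ n : ℕ,
      (⋃ k, ⋃ i ∈ Finset.range k, closedBall (u i) (((n : ℝ) + 1)⁻¹)) = univ := by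
    intro n
    ext y
    simp only [mem_univ, iff_true, mem_iUnion]
    obtain ⟨i, hi⟩ := hu.exists_dist_lt y (by positivity : (0:ℝ) < ((n : ℝ) + 1)⁻¹)
    exact ⟨i + 1, i, Finset.mem_range.mpr (Nat.lt_succ_self i), le_of_lt hi⟩
  have hdiv0 : ∀ n : ℕ, (m / 2 ^ (n + 2) : ℝ≥0∞) ≠ 0 := by
    intro n
    exact (ENNReal.div_pos hm0 (by simp)).ne'
  have key : ∀ n : ℕ, ∃ k,
      m - m / 2 ^ (n + 2) <
        μ (⋃ i ∈ Finset.range k, closedBall (u i) (((n : ℝ) + 1)⁻¹)) := by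
    intro n
    have hmono : Monotone (fun k => ⋃ i ∈ Finset.range k, closedBall (u i) (((n : ℝ) + 1)⁻¹)) :=
      fun a b hab => biUnion_subset_biUnion_left (Finset.range_subset_range.mpr hab)
    have htend := tendsto_measure_iUnion_atTop (μ := μ) hmono
    rw [cover n] at htend
    have hlt : m - m / 2 ^ (n + 2) < m :=
      ENNReal.sub_lt_self hmtop hm0 (hdiv0 n)
    exact (htend.eventually_const_lt hlt).exists
  choose K hK using key
  set S : ℕ → Set Y := fun n => ⋃ i ∈ Finset.range (K n), closedBall (u i) (((n : ℝ) + 1)⁻¹)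
    with hS_def
  have hSclosed : ∀ n, IsClosed (S n) := by
    intro n
    exact isClosed_biUnion_finset (fun i _ => isClosed_closedBall)
  set C := ⋂ n, S n with hC_def
  have hCclosed : IsClosed C := isClosed_iInter hSclosed
  have hCtb : TotallyBounded C := by
    rw [Metric.totallyBounded_iff]
    intro ε hε
    obtain ⟨n, hn⟩ := exists_nat_one_div_lt hε
    refine ⟨u '' (Finset.range (K n) : Set ℕ), ((Finset.range (K n)).finite_toSet.image u), ?_⟩
    intro x hx
    have hxS : x ∈ S n := mem_iInter.mp hx n
    simp only [hS_def, mem_iUnion, exists_prop] at hxS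
    obtain ⟨i, hi, hxi⟩ := hxS
    have : dist x (u i) < ε := lt_of_le_of_lt (mem_closedBall.mp hxi)
      (by rw [← one_div]; exact_mod_cast hn)
    exact mem_biUnion (mem_image_of_mem u hi) (mem_ball.mpr this)
  have hC : IsCompact C := hCtb.isCompact_of_isClosed hCclosed
  refine ⟨C, hC, ?_⟩
  have hSc : ∀ n, μ (S n)ᶜ ≤ m / 2 ^ (n + 2) := by
    intro n
    rw [measure_compl (hSclosed n).measurableSet (measure_ne_top μ _)]
    exact tsub_le_iff_left.mpr (tsub_le_iff_right.mp (hK n).le)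
  have hsum : (∑' n : ℕ, (m / 2 ^ (n + 2) : ℝ≥0∞)) = m / 2 := by
    have h1 : ∀ n : ℕ, (m / 2 ^ (n + 2) : ℝ≥0∞) = (m / 4) * 2⁻¹ ^ n := by
      intro n
      rw [div_eq_mul_inv, div_eq_mul_inv, mul_assoc, ← ENNReal.inv_pow]
      congr 1
      rw [pow_add, ENNReal.mul_inv (by simp) (by simp)]
      rw [mul_comm]; norm_num
    simp_rw [h1]
    rw [ENNReal.tsum_mul_left, ENNReal.tsum_geometric, ENNReal.one_sub_inv_two, inv_inv]
    rw [div_eq_mul_inv, div_eq_mul_inv, mul_assoc]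
    congr 1
    rw [show (4 : ℝ≥0∞) = 2 * 2 by norm_num, ENNReal.mul_inv (by simp) (by simp)]
    rw [mul_assoc, ENNReal.inv_mul_cancel (by simp) (by simp), mul_one]
  have hCc : μ Cᶜ ≤ m / 2 := by
    have hcompl : Cᶜ = ⋃ n, (S n)ᶜ := by rw [hC_def, compl_iInter]
    rw [hcompl]
    exact le_trans (measure_iUnion_le _) (le_trans (ENNReal.tsum_le_tsum hSc) hsum.le)
  by_contra h
  push_neg at h
  have hC0 : μ C = 0 := le_antisymm h zero_le
  have : m ≤ m / 2 := by
    calc m = μ C + μ Cᶜ := (measure_add_measure_compl hCclosed.measurableSet).symm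
      _ = μ Cᶜ := by rw [hC0, zero_add]
      _ ≤ m / 2 := hCc
  exact absurd this (not_le.mpr (ENNReal.half_lt_self hm0 hmtop))


lemma exists_translate_pos (ν : Measure ℝ) [IsFiniteMeasure ν] (hν : ν ≠ 0)
    {B : Set ℝ} (hB : MeasurableSet B) (hBpos : 0 < volume B) :
    ∃ t : ℝ, 0 < ν ((fun y => y - t) ⁻¹' B) := by
  by_contra h
  push_neg at h
  have h0 : ∀ t, ν ((fun y => y - t) ⁻¹' B) = 0 := fun t => le_antisymm (h t) zero_le
  have hmi : Measurable (B.indicator (1 : ℝ → ℝ≥0∞)) := measurable_one.indicator hB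
  have hpre : ∀ t : ℝ, MeasurableSet ((fun y => y - t) ⁻¹' B) :=
    fun t => hB.preimage (measurable_id.sub measurable_const)
  have key : ∫⁻ t, ν ((fun y => y - t) ⁻¹' B) ∂volume = 0 := by simp [h0]
  have step1 : ∀ t : ℝ, ν ((fun y => y - t) ⁻¹' B) = ∫⁻ y, B.indicator 1 (y - t) ∂ν := by
    intro t
    rw [← lintegral_indicator_one (hpre t)]
    rfl
  have step2 : ∫⁻ t, ∫⁻ y, B.indicator 1 (y - t) ∂ν ∂volume
      = ∫⁻ y, ∫⁻ t, B.indicator 1 (y - t) ∂volume ∂ν := by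
    apply lintegral_lintegral_swap
    exact (hmi.comp (measurable_snd.sub measurable_fst)).aemeasurable
  have step3 : ∀ y : ℝ, ∫⁻ t, B.indicator 1 (y - t) ∂volume = volume B := by
    intro y
    rw [(Measure.measurePreserving_sub_left volume y).lintegral_comp hmi]
    exact lintegral_indicator_one hB
  rw [funext fun t => step1 t] at key
  rw [step2] at key
  simp only [step3] at key
  rw [lintegral_const] at key
  have : volume B * ν univ ≠ 0 :=
    mul_ne_zero hBpos.ne' (Measure.measure_univ_ne_zero.mpr hν)
  exact this key


lemma isMeagre_preimage_Icc {s : Set ℝ} (hs : IsMeagre s) :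
    IsMeagre ((fun t : Icc (0:ℝ) 1 => (t : ℝ)) ⁻¹' s) := by
  rw [isMeagre_iff_countable_union_isNowhereDense] at hs ⊢
  obtain ⟨S, hnd, hct, hsub⟩ := hs
  refine ⟨(fun t => (fun x : Icc (0:ℝ) 1 => (x : ℝ)) ⁻¹' (closure t)) '' S, ?_, hct.image _, ?_⟩
  · rintro _ ⟨t, htS, rfl⟩
    have h1 : IsClosed ((fun x : Icc (0:ℝ) 1 => (x : ℝ)) ⁻¹' closure t) :=
      isClosed_closure.preimage continuous_subtype_val
    rw [h1.isNowhereDense_iff]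
    by_contra h
    obtain ⟨x, hx⟩ := nonempty_iff_ne_empty.mpr h
    obtain ⟨W, hWopen, hWeq⟩ := isOpen_induced_iff.mp
      (isOpen_interior :
        IsOpen (interior ((fun x : Icc (0:ℝ) 1 => (x : ℝ)) ⁻¹' closure t)))
    have hxW : (x : ℝ) ∈ W := by
      rw [← hWeq] at hx; exact hx
    have hxcl : (x : ℝ) ∈ closure (Ioo (0:ℝ) 1) := by
      rw [closure_Ioo (by norm_num : (0:ℝ) ≠ 1)]
      exact x.2
    obtain ⟨y, hyW, hyI⟩ := mem_closure_iff.mp hxcl W hWopen hxW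
    have hsubint : W ∩ Ioo 0 1 ⊆ interior (closure t) := by
      apply interior_maximal _ (hWopen.inter isOpen_Ioo)
      rintro z ⟨hzW, hzI⟩
      have hz : (⟨z, Ioo_subset_Icc_self hzI⟩ : Icc (0:ℝ) 1) ∈
          interior ((fun x : Icc (0:ℝ) 1 => (x : ℝ)) ⁻¹' closure t) := by
        rw [← hWeq]; exact hzW
      have hz2 := interior_subset hz
      exact hz2
    have : y ∈ interior (closure t) := hsubint ⟨hyW, hyI⟩
    rw [hnd t htS] at this
    exact this
  · intro x hx
    obtain ⟨t, htS, hxt⟩ := hsub hx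
    exact ⟨_, ⟨t, htS, rfl⟩, subset_closure hxt⟩


/-- A set in a topological abelian group is *Haar meager* if there is a Borel set `B ⊇ A`,
a nonempty compact metric space `K` and a continuous `f : K → G` such that `f ⁻¹' (B + x)`
is meager in `K` for every `x ∈ G`. -/
def IsHaarMeager {G : Type*} [TopologicalSpace G] [AddCommGroup G] (A : Set G) : Prop :=
  ∃ B : Set G, A ⊆ B ∧ MeasurableSet[borel G] B ∧
    ∃ (K : Type) (_ : MetricSpace K) (_ : CompactSpace K) (_ : Nonempty K) (f : K → G),
      Continuous f ∧ ∀ x : G, IsMeagre (f ⁻¹' ((fun b => b + x) '' B))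

/-- A set in a topological abelian group is *Haar null* if there is a Borel probability
measure `μ` and a Borel set `B ⊇ A` with `μ (x + B) = 0` for every `x ∈ G`. -/
def IsHaarNull {G : Type*} [TopologicalSpace G] [AddCommGroup G] (A : Set G) : Prop :=
  ∃ μ : @Measure G (borel G), @IsProbabilityMeasure G (borel G) μ ∧
    ∃ B : Set G, A ⊆ B ∧ MeasurableSet[borel G] B ∧
      ∀ x : G, μ ((fun b => x + b) '' B) = 0

/-- If `A ⊆ X` is a Borel set such that every compact set admits a translate inside `A`,
and `B ⊆ ℝ` is a meager Borel set of positive Lebesgue measure, then `S := B × A` is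
Haar meager (hence meager) but not Haar null in `ℝ × X`. -/
theorem haarMeager_meager_not_haarNull {X : Type*}
    [TopologicalSpace X] [AddCommGroup X] [IsTopologicalAddGroup X] [PolishSpace X]
    (A : Set X) (hA : MeasurableSet[borel X] A)
    (hAF : ∀ K : Set X, IsCompact K → ∃ x : X, (fun k => k + x) '' K ⊆ A)
    (B : Set ℝ) (hB : MeasurableSet[borel ℝ] B) (hBme : IsMeagre B)
    (hBpos : 0 < volume B) :
    IsHaarMeager (B ×ˢ A) ∧ IsMeagre (B ×ˢ A) ∧ ¬ IsHaarNull (B ×ˢ A) := by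
  letI : MeasurableSpace X := borel X
  haveI : BorelSpace X := ⟨rfl⟩
  have hE : borel (ℝ × X) = (inferInstance : MeasurableSpace (ℝ × X)) :=
    (BorelSpace.measurable_eq (α := ℝ × X)).symm
  have hBm : MeasurableSet B := by
    rw [BorelSpace.measurable_eq (α := ℝ)]; exact hB
  have hAm : MeasurableSet A := hA
  have hSm : MeasurableSet (B ×ˢ A) := hBm.prod hAm
  refine ⟨?_, ?_, ?_⟩
  · -- Haar meager
    refine ⟨B ×ˢ A, subset_rfl, hE.symm ▸ hSm,
      ↥(Icc (0:ℝ) 1), inferInstance, isCompact_iff_compactSpace.mp isCompact_Icc,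
      ⟨⟨0, left_mem_Icc.mpr zero_le_one⟩⟩,
      fun t => ((t : ℝ), (0 : X)),
      continuous_subtype_val.prodMk continuous_const, ?_⟩
    intro x
    have hmeagB : IsMeagre ((fun y : ℝ => y - x.1) ⁻¹' B) :=
      hBme.preimage_of_isOpenMap (Homeomorph.subRight x.1).continuous
        (Homeomorph.subRight x.1).isOpenMap
    refine (isMeagre_preimage_Icc hmeagB).mono ?_
    rintro t ⟨b, hb, hbe⟩
    have h1 : b.1 + x.1 = (t : ℝ) := congrArg Prod.fst hbe
    have : (t : ℝ) - x.1 ∈ B := by rw [← h1, add_sub_cancel_right]; exact hb.1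
    exact this
  · -- meager
    exact (hBme.preimage_of_isOpenMap continuous_fst isOpenMap_fst).mono
      (fun p hp => hp.1)
  · -- not Haar null
    intro hcontra
    unfold IsHaarNull at hcontra
    rw [hE] at hcontra
    obtain ⟨μ, hprob, B', hsub, hB'meas, hzero⟩ := hcontra
    haveI := hprob
    have hμ0 : μ ≠ 0 := by
      intro h0
      have := measure_univ (μ := μ)
      rw [h0] at this
      simp at this
    obtain ⟨C, hCcomp, hCpos⟩ := exists_isCompact_pos μ hμ0
    have hC2 : IsCompact (Prod.snd '' C) := hCcomp.image continuous_snd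
    obtain ⟨x₂, hx₂⟩ := hAF _ hC2
    set ν := (μ.restrict C).map Prod.fst with hν_def
    have hν_univ : ν univ = μ C := by
      rw [hν_def, Measure.map_apply measurable_fst MeasurableSet.univ, preimage_univ,
        Measure.restrict_apply MeasurableSet.univ, univ_inter]
    haveI : IsFiniteMeasure ν := ⟨by rw [hν_univ]; exact measure_lt_top μ C⟩
    have hν0 : ν ≠ 0 := by
      intro h0
      rw [h0] at hν_univ
      exact hCpos.ne' (by simpa using hν_univ.symm)
    obtain ⟨t, ht⟩ := exists_translate_pos ν hν0 hBm hBpos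
    have hpre_meas : MeasurableSet ((fun y : ℝ => y - t) ⁻¹' B) :=
      hBm.preimage (measurable_id.sub measurable_const)
    have hν_val : ν ((fun y : ℝ => y - t) ⁻¹' B)
        = μ (Prod.fst ⁻¹' ((fun y : ℝ => y - t) ⁻¹' B) ∩ C) := by
      rw [hν_def, Measure.map_apply measurable_fst hpre_meas,
        Measure.restrict_apply (hpre_meas.preimage measurable_fst)]
    have hsubset : Prod.fst ⁻¹' ((fun y : ℝ => y - t) ⁻¹' B) ∩ C
        ⊆ (fun b => ((t, -x₂) : ℝ × X) + b) '' B' := by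
      rintro ⟨p1, p2⟩ ⟨hp1, hpC⟩
      refine ⟨(p1 - t, p2 + x₂), hsub ⟨hp1, ?_⟩, ?_⟩
      · exact hx₂ ⟨p2, ⟨(p1, p2), hpC, rfl⟩, rfl⟩
      · simp only [Prod.mk_add_mk, Prod.mk.injEq]
        constructor
        · ring
        · abel
    have hle : μ (Prod.fst ⁻¹' ((fun y : ℝ => y - t) ⁻¹' B) ∩ C) = 0 :=
      le_antisymm (le_trans (measure_mono hsubset) (hzero (t, -x₂)).le) zero_le
    rw [hν_val, hle] at ht
    exact lt_irrefl _ ht
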